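/- There exists ε > 0 such that the closed hyperbolic ε-neighborhoods {z ∈ ℍ : Metric.infDist z C ≤ ε} of the half-circles C(n,k,+) = {z ∈ ℍ : |(z:ℂ) − α(n,k)| = r(n)} and C(n,k,−) = {z ∈ ℍ : |(z:ℂ) + α(n,k)| = r(n)} are pairwise disjoint: for any two distinct triples (n,k,sign) the corresponding closed ε-neighborhoods have empty intersection. -/

import Mathlib

open UpperHalfPlane

noncomputable section

/-- `s k = Σᵢ 2·tᵢ·3ⁱ` where `k = Σᵢ tᵢ·2ⁱ` is the binary expansion of `k`;
equivalently `s 0 = 0`, `s (2j) = 3·(s j)`, `s (2j+1) = 3·(s j) + 2`. -/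
def s : ℕ → ℕ
  | 0 => 0
  | k + 1 =>
    if (k + 1) % 2 = 0 then 3 * s ((k + 1) / 2)
    else 3 * s ((k + 1) / 2) + 2
decreasing_by all_goals (simp_wf; omega)

/-- The midpoint of the middle third removed at stage `n` from the `k`-th interval of
stage `n−1` of the middle-thirds construction on `[1,2]`. -/
def alphaC (n k : ℕ) : ℝ := 1 + (3 * s k + 1) / 3 ^ n + 1 / (2 * 3 ^ n)

/-- The common radius of the half-circles at stage `n`. -/
def radC (n : ℕ) : ℝ := 1 / (4 * 3 ^ n)

/-- The half-circle in `ℍ` of radius `r(n)` centered at `α(n,k)` (sign `true`) or at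
`−α(n,k)` (sign `false`). -/
def halfCircle (n k : ℕ) (sign : Bool) : Set ℍ :=
  if sign then {z : ℍ | ‖(z : ℂ) - (alphaC n k : ℂ)‖ = radC n}
  else {z : ℍ | ‖(z : ℂ) + (alphaC n k : ℂ)‖ = radC n}

/-! ### Arithmetic lemmas about `s` -/

lemma s_rec (k : ℕ) : s k = 3 * s (k / 2) + 2 * (k % 2) := by
  rcases k with _ | m
  · simp [s]
  · rw [s]
    rcases Nat.even_or_odd (m + 1) with h | h
    · have : (m + 1) % 2 = 0 := Nat.even_iff.mp h
      simp [this]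
    · have : (m + 1) % 2 = 1 := Nat.odd_iff.mp h
      simp [this]

lemma s_mod3 (k : ℕ) : s k % 3 = 2 * (k % 2) := by
  rw [s_rec k]; omega

lemma s_eq_zero {k : ℕ} (h : s k = 0) : k = 0 := by
  induction k using Nat.strong_induction_on with
  | _ k ih =>
    rcases Nat.eq_zero_or_pos k with rfl | hk
    · rfl
    · have hr := s_rec k
      have h2 : s (k / 2) = 0 := by omega
      have := ih (k / 2) (by omega) h2
      omega

lemma s_inj : Function.Injective s := by
  intro k₁ k₂ h
  induction k₁ using Nat.strong_induction_on generalizing k₂ with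
  | _ k₁ ih =>
    rcases Nat.eq_zero_or_pos k₁ with rfl | hk
    · exact (s_eq_zero (by simpa [s] using h.symm)).symm
    · have h1 := s_rec k₁
      have h2 := s_rec k₂
      have hm : k₁ % 2 = k₂ % 2 := by
        have := s_mod3 k₁; have := s_mod3 k₂; omega
      have hd : s (k₁ / 2) = s (k₂ / 2) := by omega
      have := ih (k₁ / 2) (by omega) hd
      omega

lemma key (d : ℕ) (hd : 1 ≤ d) (a : ℤ) (k : ℕ) :
    (3:ℤ)^(d-1) + 1 ≤ |(2*a+1) * 3^d - (2*(s k:ℤ)+1)| := by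
  induction d, hd using Nat.le_induction generalizing a k with
  | base =>
    have h := s_mod3 k
    have h' : (s k : ℤ) % 3 = 2 * ((k : ℤ) % 2) := by
      have : ((k:ℤ)) % 2 = ((k % 2 : ℕ) : ℤ) := by push_cast; omega
      rw [this]; exact_mod_cast h
    simp only [pow_one, Nat.sub_self, pow_zero]
    rw [le_abs]
    omega
  | succ d hd ih =>
    have hM := ih a (k / 2)
    have hrec : (s k : ℤ) = 3 * (s (k/2) : ℤ) + 2 * ((k % 2 : ℕ) : ℤ) := by
      exact_mod_cast s_rec k
    set M := (2*a+1) * 3^d - (2*(s (k/2):ℤ)+1) with hMdef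
    have hE : (2*a+1) * 3^(d+1) - (2*(s k:ℤ)+1) = 3*M + 2 - 4*((k % 2 : ℕ) : ℤ) := by
      rw [hrec, hMdef]; ring
    have hpow : (3:ℤ)^d = 3 * 3^(d-1) := by
      conv_lhs => rw [show d = (d-1)+1 by omega]
      rw [pow_succ]; ring
    have ht : ((k % 2 : ℕ) : ℤ) = 0 ∨ ((k % 2 : ℕ) : ℤ) = 1 := by omega
    have h1 : (3:ℤ)^(d+1-1) = 3^d := by norm_num
    rw [h1, hE, hpow]
    rw [le_abs] at hM ⊢
    omega

lemma sepZ_lt {n₁ n₂ : ℕ} (k₁ k₂ : ℕ) (h : n₁ < n₂) :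
    (3:ℤ)^n₁ + 3^n₂ ≤ |(6*(s k₁:ℤ)+3) * 3^n₂ - (6*(s k₂:ℤ)+3) * 3^n₁| := by
  obtain ⟨d, hd1, rfl⟩ : ∃ d, 1 ≤ d ∧ n₂ = n₁ + d := ⟨n₂ - n₁, by omega, by omega⟩
  have hk := key d hd1 (s k₁ : ℤ) k₂
  have hfac : (6*(s k₁:ℤ)+3) * 3^(n₁+d) - (6*(s k₂:ℤ)+3) * 3^n₁
      = (3^n₁ * 3) * ((2*(s k₁:ℤ)+1) * 3^d - (2*(s k₂:ℤ)+1)) := by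
    rw [pow_add]; ring
  rw [hfac, abs_mul, abs_of_nonneg (by positivity : (0:ℤ) ≤ 3^n₁ * 3)]
  have hpow : (3:ℤ)^d = 3 * 3^(d-1) := by
    conv_lhs => rw [show d = (d-1)+1 by omega]
    rw [pow_succ]; ring
  have hp1 : (0:ℤ) < 3^n₁ := by positivity
  have hp2 : (0:ℤ) < 3^(d-1) := by positivity
  calc (3:ℤ)^n₁ + 3^(n₁+d) = 3^n₁ + 3^n₁ * 3^d := by rw [pow_add]
    _ ≤ 3^n₁ * 3 * (3^(d-1) + 1) := by rw [hpow]; nlinarith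
    _ ≤ 3^n₁ * 3 * |(2*(s k₁:ℤ)+1) * 3^d - (2*(s k₂:ℤ)+1)| := by
        apply mul_le_mul_of_nonneg_left hk (by positivity)

lemma sepZ {n₁ k₁ n₂ k₂ : ℕ} (hne : (n₁, k₁) ≠ (n₂, k₂)) :
    (3:ℤ)^n₁ + 3^n₂ ≤ |(6*(s k₁:ℤ)+3) * 3^n₂ - (6*(s k₂:ℤ)+3) * 3^n₁| := by
  rcases lt_trichotomy n₁ n₂ with h | h | h
  · exact sepZ_lt k₁ k₂ h
  · subst h
    have hk : k₁ ≠ k₂ := by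
      intro hk; exact hne (by rw [hk])
    have hs : (s k₁ : ℤ) ≠ (s k₂ : ℤ) := by
      intro hss; exact hk (s_inj (by exact_mod_cast hss))
    have hfac : (6*(s k₁:ℤ)+3) * 3^n₁ - (6*(s k₂:ℤ)+3) * 3^n₁
        = ((s k₁:ℤ) - (s k₂:ℤ)) * (6 * 3^n₁) := by ring
    rw [hfac, abs_mul, abs_of_nonneg (by positivity : (0:ℤ) ≤ 6 * 3^n₁)]
    have : (1:ℤ) ≤ |(s k₁:ℤ) - (s k₂:ℤ)| := by
      rw [← zero_add 1, Int.add_one_le_iff, abs_pos, sub_ne_zero]; exact hs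
    have hp : (0:ℤ) < 3^n₁ := by positivity
    nlinarith
  · rw [abs_sub_comm]
    have := sepZ_lt k₂ k₁ h
    linarith

lemma sepR {n₁ k₁ n₂ k₂ : ℕ} (hne : (n₁, k₁) ≠ (n₂, k₂)) :
    2 * (radC n₁ + radC n₂) ≤ |alphaC n₁ k₁ - alphaC n₂ k₂| := by
  have hz := sepZ hne
  have e1 : alphaC n₁ k₁ - alphaC n₂ k₂
      = (((6*(s k₁:ℤ)+3) * 3^n₂ - (6*(s k₂:ℤ)+3) * 3^n₁ : ℤ) : ℝ) / (2*3^(n₁+n₂)) := by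
    unfold alphaC
    push_cast
    rw [pow_add]
    field_simp
    ring
  have hpos : (0:ℝ) < 2*3^(n₁+n₂) := by positivity
  rw [e1, abs_div, abs_of_pos hpos]
  have hz' : ((3:ℤ)^n₁ + 3^n₂ : ℤ) ≤ |(6*(s k₁:ℤ)+3) * 3^n₂ - (6*(s k₂:ℤ)+3) * 3^n₁| := hz
  rw [show ((3:ℤ)^n₁ + 3^n₂ ≤ |(6*(s k₁:ℤ)+3) * 3^n₂ - (6*(s k₂:ℤ)+3) * 3^n₁|) ↔
      (((3:ℤ)^n₁ + 3^n₂ : ℤ):ℝ) ≤ ((|(6*(s k₁:ℤ)+3) * 3^n₂ - (6*(s k₂:ℤ)+3) * 3^n₁| : ℤ):ℝ)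
      from (Int.cast_le).symm] at hz'
  push_cast at hz'
  have e2 : 2*(radC n₁ + radC n₂) = ((3:ℝ)^n₁ + 3^n₂)/(2*3^(n₁+n₂)) := by
    unfold radC; rw [pow_add]; field_simp; ring
  rw [e2]
  gcongr
  push_cast
  exact hz'

lemma alphaC_ge_one (n k : ℕ) : 1 ≤ alphaC n k := by
  unfold alphaC
  have h1 : (0:ℝ) ≤ (3 * s k + 1) / 3 ^ n := by positivity
  have h2 : (0:ℝ) ≤ 1 / (2 * 3 ^ n) := by positivity
  linarith

lemma radC_pos (n : ℕ) : 0 < radC n := by unfold radC; positivity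

lemma radC_le {n : ℕ} (h : 1 ≤ n) : radC n ≤ 1/12 := by
  unfold radC
  have h3 : (3:ℝ) ≤ 3 ^ n := by
    calc (3:ℝ) = 3^1 := (pow_one 3).symm
    _ ≤ 3^n := pow_le_pow_right₀ (by norm_num) h
  rw [div_le_div_iff₀ (by positivity) (by norm_num)]
  linarith

/-! ### Hyperbolic geometry lemmas -/

open Complex in
open scoped ComplexConjugate in
lemma im_identity (ζ ω : ℂ) :
    (conj ω * ((ζ - ω) * (conj ζ - ω))).im = ω.im * (Complex.normSq ω - Complex.normSq ζ) := by
  simp [Complex.mul_im, Complex.mul_re, Complex.normSq_apply, Complex.sub_re, Complex.sub_im]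
  ring

open scoped ComplexConjugate in
lemma alg (z w : ℂ) (a r : ℝ) (hw : ‖w - a‖ = r) (hwim : 0 ≤ w.im) :
    w.im * |r^2 - ‖z - a‖^2| ≤ r * (‖z - w‖ * ‖z - conj w‖) := by
  set ζ : ℂ := z - a with hζ
  set ω : ℂ := w - a with hω
  have h1 : ω.im = w.im := by simp [hω]
  have h2 : Complex.normSq ω = r^2 := by rw [← Complex.sq_norm, ← hw]
  have h3 : ζ - ω = z - w := by rw [hζ, hω]; ring
  have h4 : conj ζ - ω = conj (z - conj w) := by
    rw [hζ, hω, map_sub, map_sub, Complex.conj_conj, Complex.conj_ofReal]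
    ring
  calc w.im * |r^2 - ‖z - a‖^2|
      = |(conj ω * ((ζ - ω) * (conj ζ - ω))).im| := by
        rw [im_identity, h1, h2, ← Complex.sq_norm ζ, abs_mul, _root_.abs_of_nonneg hwim, hζ]
    _ ≤ ‖conj ω * ((ζ - ω) * (conj ζ - ω))‖ := Complex.abs_im_le_norm _
    _ = r * (‖z - w‖ * ‖z - conj w‖) := by
        rw [norm_mul, norm_mul, Complex.norm_conj, hw, h3, h4, Complex.norm_conj]

open scoped ComplexConjugate in
lemma sinh_dist_eq (z w : ℍ) :
    Real.sinh (dist z w) =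
      ‖(z:ℂ) - w‖ * ‖(z:ℂ) - conj (w:ℂ)‖ / (2 * (z.im * w.im)) := by
  have h : dist z w = 2 * (dist z w / 2) := by ring
  rw [h, Real.sinh_two_mul, UpperHalfPlane.sinh_half_dist, UpperHalfPlane.cosh_half_dist]
  have hy : 0 < z.im := z.im_pos
  have hv : 0 < w.im := w.im_pos
  have hyv : 0 < z.im * w.im := mul_pos hy hv
  have hsp : 0 < Real.sqrt (z.im * w.im) := Real.sqrt_pos.mpr hyv
  rw [Complex.dist_eq, Complex.dist_eq]
  field_simp
  ring_nf
  rw [Real.sq_sqrt hyv.le]; ring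

lemma core (a r : ℝ) (z w : ℍ) (hw : ‖(w:ℂ) - a‖ = r) :
    |r^2 - ‖(z:ℂ) - a‖^2| ≤ 2 * r * z.im * Real.sinh (dist z w) := by
  have hy : 0 < z.im := z.im_pos
  have hv : 0 < w.im := w.im_pos
  have halg := alg (z:ℂ) (w:ℂ) a r hw (by rw [UpperHalfPlane.coe_im]; exact hv.le)
  rw [UpperHalfPlane.coe_im] at halg
  rw [sinh_dist_eq]
  rw [show 2 * r * z.im * (‖(z:ℂ) - w‖ *
        ‖(z:ℂ) - (starRingEnd ℂ) (w:ℂ)‖ / (2 * (z.im * w.im)))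
      = (r * (‖(z:ℂ) - w‖ * ‖(z:ℂ) - (starRingEnd ℂ) (w:ℂ)‖)) / w.im by
    field_simp]
  rw [le_div_iff₀ hv]
  linarith

lemma sinh_quarter : Real.sinh (1/4) ≤ 3/4 := by
  have h4 : Real.exp (1/4) ^ (4:ℕ) = Real.exp 1 := by
    rw [← Real.exp_nat_mul]; norm_num
  have he : Real.exp 1 < 2.7182818286 := Real.exp_one_lt_d9
  have hp : 0 < Real.exp (1/4) := Real.exp_pos _
  have hb : Real.exp (1/4) ≤ 3/2 := by
    by_contra hb'
    push_neg at hb'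
    have h2 : (3/2:ℝ)^(4:ℕ) ≤ Real.exp (1/4)^(4:ℕ) := by
      apply pow_le_pow_left₀ (by norm_num) hb'.le
    rw [h4] at h2
    norm_num at h2
    linarith
  have hn : 0 < Real.exp (-(1/4)) := Real.exp_pos _
  rw [Real.sinh_eq]
  linarith [hn, hb]

lemma nbhd (a r : ℝ) (hr : 0 < r) (z : ℍ)
    (h : Metric.infDist z {w : ℍ | ‖(w:ℂ) - a‖ = r} ≤ 1/8) :
    ‖(z:ℂ) - a‖ < 2 * r := by
  have hne : Set.Nonempty {w : ℍ | ‖(w:ℂ) - a‖ = r} := by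
    refine ⟨⟨(a:ℂ) + r * Complex.I, by simpa using hr⟩, ?_⟩
    show ‖(a:ℂ) + r * Complex.I - a‖ = r
    rw [show (a:ℂ) + r * Complex.I - a = (r:ℂ) * Complex.I by ring]
    simp [abs_of_pos hr]
  obtain ⟨w, hwS, hwd⟩ := (Metric.infDist_lt_iff hne).mp
    (lt_of_le_of_lt h (by norm_num : (1:ℝ)/8 < 1/4))
  have hcore := core a r z w hwS
  have hs : Real.sinh (dist z w) < Real.sinh (1/4) := Real.sinh_lt_sinh.mpr hwd
  have hs2 : Real.sinh (1/4) ≤ 3/4 := sinh_quarter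
  have hy : 0 < z.im := z.im_pos
  set ρ := ‖(z:ℂ) - a‖ with hρ
  have hyρ : z.im ≤ ρ := by
    rw [hρ]
    calc z.im = ((z:ℂ) - a).im := by simp
      _ ≤ |((z:ℂ) - a).im| := le_abs_self _
      _ ≤ ‖(z:ℂ) - a‖ := Complex.abs_im_le_norm _
  have hρ0 : 0 ≤ ρ := norm_nonneg _
  have hk : |r^2 - ρ^2| < 3/2 * (r * ρ) := by
    have hstep : 2 * r * z.im * Real.sinh (dist z w) < 2 * r * z.im * (3/4) := by
      apply mul_lt_mul_of_pos_left (lt_of_lt_of_le hs hs2)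
      positivity
    nlinarith [hcore, hstep, hyρ, hr, hy]
  have habs : ρ^2 - r^2 ≤ |r^2 - ρ^2| := by
    rw [abs_sub_comm]; exact le_abs_self _
  nlinarith [hk, habs, hr, hρ0]

lemma nbhd' (n k : ℕ) (b : Bool) (z : ℍ)
    (h : Metric.infDist z (halfCircle n k b) ≤ 1/8) :
    ‖(z:ℂ) - ((if b then alphaC n k else -alphaC n k : ℝ) : ℂ)‖ < 2 * radC n := by
  cases b with
  | true =>
    simp only [if_true]
    apply nbhd (alphaC n k) (radC n) (radC_pos n) z
    simpa [halfCircle] using h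
  | false =>
    simp only [Bool.false_eq_true, if_false]
    apply nbhd (-(alphaC n k)) (radC n) (radC_pos n) z
    have he : halfCircle n k false
        = {w : ℍ | ‖(w:ℂ) - ((-alphaC n k : ℝ):ℂ)‖ = radC n} := by
      unfold halfCircle
      simp only [Bool.false_eq_true, if_false]
      ext w
      rw [Set.mem_setOf_eq, Set.mem_setOf_eq, Complex.ofReal_neg, sub_neg_eq_add]
    rw [← he]
    exact h

/-- There is `ε > 0` such that the closed hyperbolic `ε`-neighborhoods of the half-circles
`C(n,k,±)` are pairwise disjoint. -/
theorem stmt_2 :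
    ∃ ε > (0 : ℝ),
      ∀ (n₁ k₁ : ℕ) (b₁ : Bool) (n₂ k₂ : ℕ) (b₂ : Bool),
        1 ≤ n₁ → k₁ < 2 ^ (n₁ - 1) → 1 ≤ n₂ → k₂ < 2 ^ (n₂ - 1) →
        (n₁, k₁, b₁) ≠ (n₂, k₂, b₂) →
        {z : ℍ | Metric.infDist z (halfCircle n₁ k₁ b₁) ≤ ε} ∩
          {z : ℍ | Metric.infDist z (halfCircle n₂ k₂ b₂) ≤ ε} = ∅ := by
  refine ⟨1/8, by norm_num, ?_⟩
  intro n₁ k₁ b₁ n₂ k₂ b₂ hn₁ hk₁ hn₂ hk₂ hne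
  rw [Set.eq_empty_iff_forall_notMem]
  rintro z ⟨hz₁, hz₂⟩
  simp only [Set.mem_setOf_eq] at hz₁ hz₂
  have h1 := nbhd' n₁ k₁ b₁ z hz₁
  have h2 := nbhd' n₂ k₂ b₂ z hz₂
  set c₁ : ℝ := if b₁ then alphaC n₁ k₁ else -alphaC n₁ k₁ with hc₁
  set c₂ : ℝ := if b₂ then alphaC n₂ k₂ else -alphaC n₂ k₂ with hc₂
  have tri : |c₁ - c₂| ≤ ‖(z:ℂ) - c₁‖ + ‖(z:ℂ) - c₂‖ := by
    calc |c₁ - c₂| = ‖((c₁ - c₂ : ℝ) : ℂ)‖ := ((Complex.norm_real _).trans (Real.norm_eq_abs _)).symm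
      _ = ‖((c₁:ℂ) - z) + ((z:ℂ) - c₂)‖ := by push_cast; ring_nf
      _ ≤ ‖(c₁:ℂ) - z‖ + ‖(z:ℂ) - c₂‖ := norm_add_le _ _
      _ = ‖(z:ℂ) - c₁‖ + ‖(z:ℂ) - c₂‖ := by
        rw [norm_sub_rev ((c₁:ℂ)) (z:ℂ)]
  have sep : 2 * (radC n₁ + radC n₂) ≤ |c₁ - c₂| := by
    have hα₁ := alphaC_ge_one n₁ k₁
    have hα₂ := alphaC_ge_one n₂ k₂
    have hr₁ := radC_le hn₁
    have hr₂ := radC_le hn₂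
    cases b₁ <;> cases b₂ <;> simp only [if_true, Bool.false_eq_true, if_false] at hc₁ hc₂
    · -- both false
      have hne' : (n₁, k₁) ≠ (n₂, k₂) := by
        intro hh
        apply hne
        rw [Prod.mk.injEq] at hh
        rw [Prod.mk.injEq, Prod.mk.injEq]
        exact ⟨hh.1, hh.2, rfl⟩
      have := sepR hne'
      rw [hc₁, hc₂, show -alphaC n₁ k₁ - -alphaC n₂ k₂ = -(alphaC n₁ k₁ - alphaC n₂ k₂) by ring,
        abs_neg]
      exact this
    · -- false, true
      rw [hc₁, hc₂, show -alphaC n₁ k₁ - alphaC n₂ k₂ = -(alphaC n₁ k₁ + alphaC n₂ k₂) by ring,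
        abs_neg, abs_of_nonneg (by linarith)]
      linarith
    · -- true, false
      rw [hc₁, hc₂, sub_neg_eq_add, abs_of_nonneg (by linarith)]
      linarith
    · -- both true
      have hne' : (n₁, k₁) ≠ (n₂, k₂) := by
        intro hh
        apply hne
        rw [Prod.mk.injEq] at hh
        rw [Prod.mk.injEq, Prod.mk.injEq]
        exact ⟨hh.1, hh.2, rfl⟩
      rw [hc₁, hc₂]
      exact sepR hne'
  linarith [h1, h2, tri, sep]
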